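/- Let ζ be a stochastic process on a probability space (Ω, ℱ, P) indexed by [0,1] such that ζ(·,t) is measurable for each t ∈ [0,1], the sample path ζ(ω,·) is continuous for each ω ∈ Ω, and ζ is a Gaussian process, i.e., for every finite set of points t₁,…,t_k ∈ [0,1] and real coefficients c₁,…,c_k the random variable Σᵢ cᵢ ζ(·,tᵢ) has a (possibly degenerate) Gaussian distribution on ℝ. Then the law of the induced map ζ̃ : Ω → C([0,1],ℝ), ζ̃(ω) = ζ(ω,·), is a Gaussian measure on C([0,1],ℝ): for every continuous linear functional L on C([0,1],ℝ), the pushforward of the law of ζ̃ under L is a (possibly degenerate) Gaussian measure on ℝ. -/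

import Mathlib

open MeasureTheory ProbabilityTheory
open scoped NNReal

noncomputable instance : MeasurableSpace C(Set.Icc (0:ℝ) 1, ℝ) := borel _
instance : BorelSpace C(Set.Icc (0:ℝ) 1, ℝ) := ⟨rfl⟩


section StmtAuxSection

open Set Filter Topology
open scoped ENNReal

namespace StmtAux

lemma gauss_std_map (m : ℝ) (v : ℝ≥0) :
    gaussianReal m v = (gaussianReal 0 1).map (fun z => Real.sqrt v * z + m) := by
  have h1 : (gaussianReal (0:ℝ) 1).map (fun z => Real.sqrt v * z) = gaussianReal 0 v := by
    have := gaussianReal_map_const_mul (μ := 0) (v := 1) (Real.sqrt v)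
    rw [show ((Real.sqrt v) * · ) = (fun z => Real.sqrt v * z) from rfl] at this
    rw [this]
    congr 1
    · ring
    · ext
      simp [Real.sq_sqrt v.coe_nonneg]
  have h2 : ((gaussianReal (0:ℝ) 1).map (fun z => Real.sqrt v * z)).map (· + m)
      = gaussianReal m v := by
    rw [h1, gaussianReal_map_add_const m, zero_add]
  rw [← h2, Measure.map_map (measurable_id'.add_const m) (measurable_const_mul _)]
  rfl

lemma gauss_std_apply (m : ℝ) (v : ℝ≥0) {s : Set ℝ} (hs : MeasurableSet s) :
    gaussianReal m v s = gaussianReal 0 1 ((fun z => Real.sqrt v * z + m) ⁻¹' s) := by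
  rw [gauss_std_map m v, Measure.map_apply ((measurable_const_mul _).add_const m) hs]

lemma gauss_neg_symm (v : ℝ≥0) : (gaussianReal 0 v).map (fun x => -x) = gaussianReal 0 v := by
  have := gaussianReal_map_const_mul (μ := 0) (v := v) (-1)
  rw [show ((-1:ℝ) * ·) = (fun x : ℝ => -x) by funext x; ring] at this
  rw [this]
  congr 1
  · ring
  · ext; norm_num

lemma gauss_Iic_neg (t : ℝ) : gaussianReal 0 1 (Iic (-t)) = gaussianReal 0 1 (Ici t) := by
  conv_lhs => rw [← gauss_neg_symm 1]
  rw [Measure.map_apply measurable_neg measurableSet_Iic]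
  congr 1
  ext x
  simp

lemma gauss_half_Ici (m : ℝ) (v : ℝ≥0) : 1/2 ≤ gaussianReal m v (Ici m) := by
  have hshift : gaussianReal m v (Ici m) = gaussianReal 0 v (Ici 0) := by
    have h := gaussianReal_map_add_const (μ := 0) (v := v) m
    rw [zero_add] at h
    rw [← h, Measure.map_apply (measurable_id'.add_const m) measurableSet_Ici]
    congr 1
    ext x
    simp
  rw [hshift]
  set μ := gaussianReal (0:ℝ) v
  have hsymm : μ (Iio 0) = μ (Ioi 0) := by
    conv_lhs => rw [show μ = (gaussianReal 0 v).map (fun x => -x) from (gauss_neg_symm v).symm]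
    rw [Measure.map_apply measurable_neg measurableSet_Iio]
    congr 1
    ext x
    simp
  have h1 : (1:ℝ≥0∞) = μ (Iio 0) + μ (Ici 0) := by
    rw [← measure_univ (μ := μ), ← Iio_union_Ici (a := (0:ℝ))]
    exact measure_union (Iio_disjoint_Ici le_rfl) measurableSet_Ici
  have h2 : (1:ℝ≥0∞) ≤ μ (Ici 0) + μ (Ici 0) := by
    rw [h1, hsymm]
    exact add_le_add (measure_mono Ioi_subset_Ici_self) le_rfl
  rw [← two_mul] at h2
  rw [ENNReal.div_le_iff (by norm_num) (by norm_num)]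
  calc (1:ℝ≥0∞) ≤ 2 * μ (Ici 0) := h2
    _ = μ (Ici 0) * 2 := by ring

lemma gauss_half_Iic (m : ℝ) (v : ℝ≥0) : 1/2 ≤ gaussianReal m v (Iic m) := by
  have hshift : gaussianReal m v (Iic m) = gaussianReal 0 v (Iic 0) := by
    have h := gaussianReal_map_add_const (μ := 0) (v := v) m
    rw [zero_add] at h
    rw [← h, Measure.map_apply (measurable_id'.add_const m) measurableSet_Iic]
    congr 1
    ext x
    simp
  rw [hshift]
  have := gauss_half_Ici 0 v
  have hshift2 : gaussianReal 0 v (Iic 0) = gaussianReal 0 v (Ici 0) := by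
    conv_lhs => rw [← gauss_neg_symm v]
    rw [Measure.map_apply measurable_neg measurableSet_Iic]
    congr 1
    ext x
    simp
  rw [hshift2]
  simpa using gauss_half_Ici 0 v

lemma gauss_c_pos : 0 < gaussianReal 0 1 (Ioi 1) := by
  rw [pos_iff_ne_zero]
  intro h
  rw [gaussianReal_apply 0 one_ne_zero] at h
  rw [lintegral_eq_zero_iff (measurable_gaussianPDF 0 1)] at h
  have : (volume.restrict (Ioi (1:ℝ))) {x | ¬ gaussianPDF 0 1 x = 0} = 0 := h
  have hall : {x : ℝ | ¬ gaussianPDF 0 1 x = 0} = univ := by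
    ext x
    simp only [mem_setOf_eq, mem_univ, iff_true]
    exact (gaussianPDF_pos 0 one_ne_zero x).ne'
  rw [hall, Measure.restrict_apply_univ] at this
  simp [Real.volume_Ioi] at this

lemma gauss_tail : Tendsto (fun n : ℕ => gaussianReal 0 1 (Ici (n:ℝ))) atTop (𝓝 0) := by
  have h := tendsto_measure_iInter_atTop (μ := gaussianReal 0 1)
    (s := fun n : ℕ => Ici (n:ℝ))
    (fun n => measurableSet_Ici.nullMeasurableSet)
    (fun i j hij => Ici_subset_Ici.2 (by exact_mod_cast hij))
    ⟨0, measure_ne_top _ _⟩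
  have hempty : (⋂ n : ℕ, Ici ((n:ℝ))) = ∅ := by
    ext x
    simp only [mem_iInter, mem_Ici, mem_empty_iff_false, iff_false, not_forall, not_le]
    obtain ⟨n, hn⟩ := exists_nat_gt x
    exact ⟨n, hn⟩
  rw [hempty] at h
  simpa [Function.comp_def] using h

-- CDF continuity at a point for the standard gaussian
lemma gauss_cdf_continuousAt (y : ℝ) :
    ContinuousAt (fun z => gaussianReal 0 1 (Iic z)) y := by
  set μ := gaussianReal (0:ℝ) 1 with hμ
  have hatom : μ {y} = 0 :=
    gaussianReal_absolutelyContinuous 0 one_ne_zero (measure_singleton y)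
  have hIio : μ (Iic y) = μ (Iio y) := by
    refine le_antisymm ?_ (measure_mono Iio_subset_Iic_self)
    have : Iic y ⊆ Iio y ∪ {y} := by
      intro x hx
      rcases lt_or_eq_of_le (mem_Iic.1 hx) with h | h
      · exact Or.inl h
      · exact Or.inr (by simp [h])
    calc μ (Iic y) ≤ μ (Iio y ∪ {y}) := measure_mono this
      _ ≤ μ (Iio y) + μ {y} := measure_union_le _ _
      _ = μ (Iio y) := by rw [hatom, add_zero]
  rw [ContinuousAt]
  refine tendsto_order.2 ⟨?_, ?_⟩
  · intro a ha
    -- a < μ (Iic y)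
    have hlim : Tendsto (fun n : ℕ => μ (Iic (y - 1/(n+1)))) atTop (𝓝 (μ (Iio y))) := by
      have hmono : Monotone (fun n : ℕ => Iic (y - 1/(n+1))) := by
        intro i j hij
        apply Iic_subset_Iic.2
        have : (1:ℝ)/(j+1) ≤ 1/(i+1) := by
          apply one_div_le_one_div_of_le (by positivity)
          exact_mod_cast Nat.succ_le_succ hij
        linarith
      have hunion : (⋃ n : ℕ, Iic (y - 1/(n+1))) = Iio y := by
        ext x
        simp only [mem_iUnion, mem_Iic, mem_Iio]
        constructor
        · rintro ⟨n, hn⟩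
          have : (0:ℝ) < 1/(n+1) := by positivity
          linarith
        · intro hx
          obtain ⟨n, hn⟩ := exists_nat_one_div_lt (show (0:ℝ) < y - x by linarith)
          exact ⟨n, by linarith⟩
      have := tendsto_measure_iUnion_atTop (μ := μ) hmono
      rwa [hunion] at this
    rw [← hIio] at hlim
    have : ∀ᶠ n : ℕ in atTop, a < μ (Iic (y - 1/(n+1))) :=
      hlim.eventually_const_lt ha
    obtain ⟨n, hn⟩ := this.exists
    have hd : (0:ℝ) < 1/(n+1) := by positivity
    filter_upwards [eventually_gt_nhds (show y - 1/(n+1) < y by linarith)] with z hz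
    exact lt_of_lt_of_le hn (measure_mono (Iic_subset_Iic.2 hz.le))
  · intro b hb
    have hlim : Tendsto (fun n : ℕ => μ (Iic (y + 1/(n+1)))) atTop (𝓝 (μ (Iic y))) := by
      have hanti : Antitone (fun n : ℕ => Iic (y + 1/(n+1))) := by
        intro i j hij
        apply Iic_subset_Iic.2
        have : (1:ℝ)/(j+1) ≤ 1/(i+1) := by
          apply one_div_le_one_div_of_le (by positivity)
          exact_mod_cast Nat.succ_le_succ hij
        linarith
      have hinter : (⋂ n : ℕ, Iic (y + 1/(n+1))) = Iic y := by
        ext x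
        simp only [mem_iInter, mem_Iic]
        constructor
        · intro h
          by_contra hx
          push_neg at hx
          obtain ⟨n, hn⟩ := exists_nat_one_div_lt (show (0:ℝ) < x - y by linarith)
          have := h n
          linarith
        · intro hx n
          have : (0:ℝ) < 1/(n+1) := by positivity
          linarith
      have := tendsto_measure_iInter_atTop (μ := μ)
        (fun n => measurableSet_Iic.nullMeasurableSet) hanti ⟨0, measure_ne_top _ _⟩
      rwa [hinter] at this
    have : ∀ᶠ n : ℕ in atTop, μ (Iic (y + 1/(n+1))) < b :=
      hlim.eventually_lt_const hb
    obtain ⟨n, hn⟩ := this.exists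
    have hd : (0:ℝ) < 1/(n+1) := by positivity
    filter_upwards [eventually_lt_nhds (show y < y + 1/(n+1) by linarith)] with z hz
    exact lt_of_le_of_lt (measure_mono (Iic_subset_Iic.2 hz.le)) hn



end StmtAux

namespace StmtAux

-- two-sided tail bound
lemma gauss_abs_bound (m : ℝ) (v : ℝ≥0) (a : ℝ) :
    gaussianReal m v {x | a ≤ |x - m|} ≤ 2 * gaussianReal 0 1 (Ici (a / Real.sqrt v)) := by
  have hmeas : MeasurableSet {x : ℝ | a ≤ |x - m|} :=
    measurableSet_le measurable_const ((measurable_id.sub_const m).abs)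
  rw [gauss_std_apply m v hmeas]
  have hsub : (fun z => Real.sqrt v * z + m) ⁻¹' {x | a ≤ |x - m|}
      ⊆ Ici (a / Real.sqrt v) ∪ Iic (-(a / Real.sqrt v)) := by
    intro z hz
    simp only [mem_preimage, mem_setOf_eq, add_sub_cancel_right] at hz
    rcases le_or_gt 0 (Real.sqrt v) with hσ | hσ
    swap
    · exact absurd (Real.sqrt_nonneg _) (not_le.2 hσ)
    rcases eq_or_lt_of_le hσ with hσ0 | hσpos
    · -- sqrt v = 0
      rw [← hσ0, zero_mul, abs_zero] at hz
      rcases le_or_gt 0 z with hz0 | hz0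
      · left
        rw [mem_Ici, ← hσ0, div_zero]
        exact hz0
      · right
        rw [mem_Iic, ← hσ0, div_zero, neg_zero]
        exact hz0.le
    · rw [abs_mul, abs_of_pos hσpos] at hz
      rcases abs_cases z with ⟨h1, _⟩ | ⟨h1, _⟩
      · left
        rw [mem_Ici, div_le_iff₀ hσpos]
        nlinarith [hz]
      · right
        rw [mem_Iic, ← neg_div, le_div_iff₀ hσpos]
        nlinarith [hz]
  calc gaussianReal 0 1 ((fun z => Real.sqrt v * z + m) ⁻¹' {x | a ≤ |x - m|})
      ≤ gaussianReal 0 1 (Ici (a / Real.sqrt v) ∪ Iic (-(a / Real.sqrt v))) :=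
        measure_mono hsub
    _ ≤ gaussianReal 0 1 (Ici (a / Real.sqrt v)) + gaussianReal 0 1 (Iic (-(a / Real.sqrt v))) :=
        measure_union_le _ _
    _ = 2 * gaussianReal 0 1 (Ici (a / Real.sqrt v)) := by
        rw [gauss_Iic_neg, two_mul]

lemma gauss_mean_bound {m : ℝ} {v : ℝ≥0} {R : ℝ} (hR : 0 ≤ R)
    (h : gaussianReal m v {x | R < |x|} < 1/2) : |m| ≤ R := by
  by_contra hlt
  push_neg at hlt
  rcases abs_cases m with ⟨he, _⟩ | ⟨he, _⟩
  · -- m > R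
    have hm : R < m := by rw [he] at hlt; exact hlt
    have hsub : Ici m ⊆ {x : ℝ | R < |x|} := by
      intro x hx
      simp only [mem_setOf_eq]
      have : R < x := lt_of_lt_of_le hm hx
      exact lt_of_lt_of_le this (le_abs_self x)
    have := le_trans (gauss_half_Ici m v) (measure_mono hsub)
    exact absurd h (not_lt.2 this)
  · have hm : m < -R := by rw [he] at hlt; linarith
    have hsub : Iic m ⊆ {x : ℝ | R < |x|} := by
      intro x hx
      simp only [mem_setOf_eq]
      have hx2 : x < -R := lt_of_le_of_lt hx hm
      have : R < -x := by linarith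
      exact lt_of_lt_of_le this (neg_le_abs x)
    have := le_trans (gauss_half_Iic m v) (measure_mono hsub)
    exact absurd h (not_lt.2 this)

lemma gauss_sigma_bound {m : ℝ} {v : ℝ≥0} {R : ℝ} (hR : 1 ≤ R) (hm : |m| ≤ R)
    (h : gaussianReal m v {x | R < |x|} < gaussianReal 0 1 (Ioi 1)) :
    Real.sqrt v ≤ 2 * R := by
  by_contra hlt
  push_neg at hlt
  have hσpos : (0:ℝ) < Real.sqrt v := lt_trans (by linarith) hlt
  have hkey : gaussianReal 0 1 (Ioi 1) ≤ gaussianReal m v {x | R < |x|} := by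
    have hIoi : gaussianReal m v (Ioi R) = gaussianReal 0 1 (Ioi ((R - m) / Real.sqrt v)) := by
      rw [gauss_std_apply m v measurableSet_Ioi]
      congr 1
      ext z
      simp only [mem_preimage, mem_Ioi]
      rw [div_lt_iff₀ hσpos]
      constructor <;> intro hh <;> nlinarith
    have harg : (R - m) / Real.sqrt v ≤ 1 := by
      rw [div_le_one hσpos]
      have : -m ≤ R := by rw [abs_le] at hm; linarith [hm.1]
      linarith
    have hmono : gaussianReal 0 1 (Ioi 1) ≤ gaussianReal 0 1 (Ioi ((R - m) / Real.sqrt v)) :=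
      measure_mono (Ioi_subset_Ioi harg)
    have hsub : Ioi R ⊆ {x : ℝ | R < |x|} := by
      intro x hx
      exact lt_of_lt_of_le hx (le_abs_self x)
    calc gaussianReal 0 1 (Ioi 1) ≤ gaussianReal m v (Ioi R) := hIoi ▸ hmono
      _ ≤ gaussianReal m v {x | R < |x|} := measure_mono hsub
  exact absurd h (not_lt.2 hkey)

end StmtAux

namespace StmtAux

lemma main_aux {Ω : Type*} [MeasurableSpace Ω] (P : Measure Ω) [IsProbabilityMeasure P]
    (S : ℕ → Ω → ℝ) (X : Ω → ℝ) (hS : ∀ n, Measurable (S n)) (hX : Measurable X)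
    (hlim : ∀ ω, Tendsto (fun n => S n ω) atTop (𝓝 (X ω)))
    (m : ℕ → ℝ) (v : ℕ → ℝ≥0)
    (hmap : ∀ n, P.map (S n) = gaussianReal (m n) (v n)) :
    ∃ (m0 : ℝ) (v0 : ℝ≥0), P.map X = gaussianReal m0 v0 := by
  have hPmap : ∀ (n : ℕ) (s : Set ℝ), MeasurableSet s →
      P (S n ⁻¹' s) = gaussianReal (m n) (v n) s := by
    intro n s hs
    rw [← hmap n, Measure.map_apply (hS n) hs]
  -- convergence in probability
  have hq : ∀ ε : ℝ, 0 < ε →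
      Tendsto (fun n => P {ω | ε ≤ |X ω - S n ω|}) atTop (𝓝 0) := by
    intro ε hε
    set D : ℕ → Set Ω := fun n => ⋃ (k : ℕ) (_ : n ≤ k), {ω | ε ≤ |X ω - S k ω|} with hD
    have hDm : ∀ n, MeasurableSet (D n) := fun n =>
      MeasurableSet.iUnion fun k => MeasurableSet.iUnion fun _ =>
        measurableSet_le measurable_const ((hX.sub (hS k)).abs)
    have hDanti : Antitone D := by
      intro i j hij ω hω
      simp only [hD, mem_iUnion, mem_setOf_eq] at hω ⊢
      obtain ⟨k, hk, hωk⟩ := hω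
      exact ⟨k, hij.trans hk, hωk⟩
    have hDempty : (⋂ n, D n) = ∅ := by
      ext ω
      simp only [hD, mem_iInter, mem_iUnion, mem_setOf_eq, mem_empty_iff_false, iff_false,
        not_forall, not_exists, not_le]
      have h0 : Tendsto (fun k => |X ω - S k ω|) atTop (𝓝 0) := by
        simpa using ((tendsto_const_nhds (x := X ω)).sub (hlim ω)).abs
      obtain ⟨N, hN⟩ := (h0.eventually_lt_const hε).exists_forall_of_atTop
      exact ⟨N, fun k hk => hN k hk⟩
    have hDtend : Tendsto (fun n => P (D n)) atTop (𝓝 0) := by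
      have := tendsto_measure_iInter_atTop (μ := P)
        (fun n => (hDm n).nullMeasurableSet) hDanti ⟨0, measure_ne_top _ _⟩
      rw [hDempty] at this
      simpa [Function.comp_def] using this
    refine tendsto_of_tendsto_of_tendsto_of_le_of_le tendsto_const_nhds hDtend
      (fun n => zero_le) (fun n => measure_mono ?_)
    intro ω hω
    simp only [hD, mem_iUnion, mem_setOf_eq]
    exact ⟨n, le_refl n, hω⟩
  -- constants
  set c : ℝ≥0∞ := gaussianReal 0 1 (Ioi 1) with hc_def
  have hc : 0 < c := gauss_c_pos
  have hct : c ≠ ⊤ := measure_ne_top _ _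
  set δ : ℝ≥0∞ := min (c / 2) 4⁻¹ with hδ_def
  have hδpos : 0 < δ := lt_min (ENNReal.div_pos hc.ne' (by norm_num)) (by norm_num)
  have hδc : δ < c := lt_of_le_of_lt (min_le_left _ _) (ENNReal.half_lt_self hc.ne' hct)
  have hδhalf : δ < 1 / 2 := by
    refine lt_of_le_of_lt (min_le_right _ _) ?_
    rw [one_div]
    exact ENNReal.inv_lt_inv.2 (by norm_num)
  -- uniform bounds for the parameters
  obtain ⟨R, hR1, hRbound⟩ : ∃ R : ℝ, 1 ≤ R ∧ ∀ n, P {ω | R < |S n ω|} < δ := by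
    set A : ℕ → Set Ω := fun j => ⋃ n, {ω | (j : ℝ) < |S n ω|} with hA
    have hAm : ∀ j, MeasurableSet (A j) := fun j =>
      MeasurableSet.iUnion fun n => measurableSet_lt measurable_const (hS n).abs
    have hAanti : Antitone A := by
      intro i j hij ω hω
      simp only [hA, mem_iUnion, mem_setOf_eq] at hω ⊢
      obtain ⟨n, hn⟩ := hω
      exact ⟨n, lt_of_le_of_lt (by exact_mod_cast hij) hn⟩
    have hAempty : (⋂ j, A j) = ∅ := by
      ext ω
      simp only [hA, mem_iInter, mem_iUnion, mem_setOf_eq, mem_empty_iff_false, iff_false,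
        not_forall, not_exists, not_lt]
      have hbdd : BddAbove (Set.range fun n => |S n ω|) :=
        ((hlim ω).abs).bddAbove_range
      obtain ⟨b, hb⟩ := hbdd
      obtain ⟨j, hj⟩ := exists_nat_gt b
      refine ⟨j, fun n => ?_⟩
      have := hb (Set.mem_range_self (f := fun n => |S n ω|) n)
      exact le_trans this hj.le
    have hAtend : Tendsto (fun j => P (A j)) atTop (𝓝 0) := by
      have := tendsto_measure_iInter_atTop (μ := P)
        (fun j => (hAm j).nullMeasurableSet) hAanti ⟨0, measure_ne_top _ _⟩
      rw [hAempty] at this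
      simpa [Function.comp_def] using this
    obtain ⟨j, hj⟩ := (hAtend.eventually_lt_const hδpos).exists
    refine ⟨(j : ℝ) + 1, by have : (0:ℝ) ≤ j := Nat.cast_nonneg j; linarith, fun n => lt_of_le_of_lt (measure_mono ?_) hj⟩
    intro ω hω
    simp only [hA, mem_iUnion, mem_setOf_eq] at hω ⊢
    exact ⟨n, by linarith [hω]⟩
  have hmR : ∀ n, |m n| ≤ R := by
    intro n
    have h : gaussianReal (m n) (v n) {x | R < |x|} < 1/2 := by
      rw [← hPmap n _ (measurableSet_lt measurable_const measurable_abs)]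
      exact lt_trans (hRbound n) hδhalf
    exact gauss_mean_bound (by linarith) h
  have hsR : ∀ n, Real.sqrt (v n) ≤ 2 * R := by
    intro n
    have h : gaussianReal (m n) (v n) {x | R < |x|} < gaussianReal 0 1 (Ioi 1) := by
      rw [← hPmap n _ (measurableSet_lt measurable_const measurable_abs)]
      exact lt_trans (hRbound n) hδc
    exact gauss_sigma_bound hR1 (hmR n) h
  -- subsequence extraction
  obtain ⟨m0, _, φ₁, hφ₁, hm0⟩ := tendsto_subseq_of_bounded (Metric.isBounded_Icc (-R) R)
    (x := m) (fun n => by simpa [mem_Icc] using abs_le.1 (hmR n))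
  obtain ⟨s0, hs0mem, φ₂, hφ₂, hs0⟩ := tendsto_subseq_of_bounded (Metric.isBounded_Icc 0 (2*R))
    (x := fun k => Real.sqrt (v (φ₁ k)))
    (fun k => mem_Icc.2 ⟨Real.sqrt_nonneg _, hsR _⟩)
  have hs0nonneg : 0 ≤ s0 := by
    rw [isClosed_Icc.closure_eq] at hs0mem
    exact hs0mem.1
  set φ : ℕ → ℕ := φ₁ ∘ φ₂ with hφ_def
  have hφ : StrictMono φ := hφ₁.comp hφ₂
  have hmφ : Tendsto (fun k => m (φ k)) atTop (𝓝 m0) := hm0.comp hφ₂.tendsto_atTop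
  have hsφ : Tendsto (fun k => Real.sqrt (v (φ k))) atTop (𝓝 s0) := hs0
  have hqφ : ∀ ε : ℝ, 0 < ε →
      Tendsto (fun k => P {ω | ε ≤ |X ω - S (φ k) ω|}) atTop (𝓝 0) :=
    fun ε hε => (hq ε hε).comp hφ.tendsto_atTop
  rcases eq_or_lt_of_le hs0nonneg with hs0z | hs0pos
  · -- degenerate case : the law of X is a Dirac mass at m0
    have hSm0 : ∀ ε : ℝ, 0 < ε →
        Tendsto (fun k => P {ω | ε ≤ |S (φ k) ω - m0|}) atTop (𝓝 0) := by
      intro ε hε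
      rw [ENNReal.tendsto_nhds_zero]
      intro δ' hδ'
      rcases eq_or_ne δ' ⊤ with hT | hT
      · exact Eventually.of_forall fun k => hT ▸ le_top
      obtain ⟨N, hN⟩ := (gauss_tail.eventually_lt_const
        (show (0:ℝ≥0∞) < δ' / 2 from ENNReal.div_pos hδ'.ne' (by norm_num))).exists
      have hev1 : ∀ᶠ k in atTop, |m (φ k) - m0| ≤ ε/2 := by
        have := hmφ.sub (tendsto_const_nhds (x := m0))
        rw [sub_self] at this
        have habs := this.abs
        rw [abs_zero] at habs
        filter_upwards [habs.eventually_le_const (show (0:ℝ) < ε/2 by linarith)] with k hk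
          using hk
      have hev2 : ∀ᶠ k in atTop, Real.sqrt (v (φ k)) < (ε/2) / (N+1) := by
        rw [← hs0z] at hsφ
        exact hsφ.eventually_lt_const (by positivity)
      filter_upwards [hev1, hev2] with k hk1 hk2
      have hsub : {ω | ε ≤ |S (φ k) ω - m0|} ⊆ S (φ k) ⁻¹' {x | ε/2 ≤ |x - m (φ k)|} := by
        intro ω hω
        simp only [mem_setOf_eq, mem_preimage] at hω ⊢
        have h1 : |S (φ k) ω - m (φ k)| ≥ |S (φ k) ω - m0| - |m (φ k) - m0| := by
          have := abs_sub_abs_le_abs_sub (S (φ k) ω - m0) (m (φ k) - m0)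
          have heq : (S (φ k) ω - m0) - (m (φ k) - m0) = S (φ k) ω - m (φ k) := by ring
          rw [heq] at this
          linarith
        linarith
      have hsetm : MeasurableSet {x : ℝ | ε/2 ≤ |x - m (φ k)|} :=
        measurableSet_le measurable_const ((measurable_id.sub_const _).abs)
      have hstep : P {ω | ε ≤ |S (φ k) ω - m0|}
          ≤ gaussianReal (m (φ k)) (v (φ k)) {x | ε/2 ≤ |x - m (φ k)|} := by
        rw [← hPmap _ _ hsetm]
        exact measure_mono hsub
      rcases eq_or_ne (v (φ k)) 0 with hv0 | hv0
      · rw [hv0, gaussianReal_zero_var] at hstep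
        rw [Measure.dirac_apply' _ hsetm] at hstep
        have hnot : m (φ k) ∉ {x : ℝ | ε/2 ≤ |x - m (φ k)|} := by
          simp only [mem_setOf_eq, sub_self, abs_zero, not_le]
          linarith
        rw [Set.indicator_of_notMem hnot] at hstep
        exact le_trans hstep zero_le
      · have hvpos : (0:ℝ) < (v (φ k) : ℝ) := by
          exact_mod_cast hv0.bot_lt
        have hpos : 0 < Real.sqrt (v (φ k)) := Real.sqrt_pos.2 hvpos
        calc P {ω | ε ≤ |S (φ k) ω - m0|}
            ≤ gaussianReal (m (φ k)) (v (φ k)) {x | ε/2 ≤ |x - m (φ k)|} := hstep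
          _ ≤ 2 * gaussianReal 0 1 (Ici ((ε/2) / Real.sqrt (v (φ k)))) := gauss_abs_bound _ _ _
          _ ≤ 2 * gaussianReal 0 1 (Ici ((N:ℝ))) := by
              refine mul_le_mul_right (measure_mono (Ici_subset_Ici.2 ?_)) 2
              rw [le_div_iff₀ hpos]
              calc (N:ℝ) * Real.sqrt (v (φ k)) ≤ (N+1) * Real.sqrt (v (φ k)) := by
                    nlinarith [Real.sqrt_nonneg ((v (φ k)):ℝ)]
                _ ≤ (N+1) * ((ε/2)/(N+1)) := by
                    have hN1 : (0:ℝ) < (N:ℝ)+1 := by positivity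
                    nlinarith [hk2]
                _ = ε/2 := by field_simp
          _ ≤ 2 * (δ'/2) := mul_le_mul_right hN.le 2
          _ = δ' := by rw [ENNReal.mul_div_cancel (by norm_num) (by norm_num)]
    have hXconst : ∀ ε : ℝ, 0 < ε → P {ω | ε ≤ |X ω - m0|} = 0 := by
      intro ε hε
      have hsub : ∀ k, {ω | ε ≤ |X ω - m0|} ⊆
          {ω | ε/2 ≤ |X ω - S (φ k) ω|} ∪ {ω | ε/2 ≤ |S (φ k) ω - m0|} := by
        intro k ω hω
        simp only [mem_setOf_eq, mem_union] at hω ⊢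
        by_contra hcon
        push_neg at hcon
        have h1 := hcon.1
        have h2 := hcon.2
        have := abs_sub_abs_le_abs_sub (X ω - m0) (X ω - S (φ k) ω)
        have heq : (X ω - m0) - (X ω - S (φ k) ω) = S (φ k) ω - m0 := by ring
        rw [heq] at this
        linarith
      have hbound : ∀ k, P {ω | ε ≤ |X ω - m0|} ≤
          P {ω | ε/2 ≤ |X ω - S (φ k) ω|} + P {ω | ε/2 ≤ |S (φ k) ω - m0|} :=
        fun k => le_trans (measure_mono (hsub k)) (measure_union_le _ _)
      have hrhs : Tendsto (fun k => P {ω | ε/2 ≤ |X ω - S (φ k) ω|}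
          + P {ω | ε/2 ≤ |S (φ k) ω - m0|}) atTop (𝓝 0) := by
        have := (hqφ (ε/2) (by linarith)).add (hSm0 (ε/2) (by linarith))
        simpa using this
      have := le_of_tendsto_of_tendsto' (tendsto_const_nhds
        (x := P {ω | ε ≤ |X ω - m0|})) hrhs hbound
      exact le_antisymm this zero_le
    have hae : X =ᵐ[P] fun _ => m0 := by
      rw [Filter.EventuallyEq, ae_iff]
      have hsub : {ω | ¬ X ω = m0} ⊆ ⋃ i : ℕ, {ω | 1/((i:ℝ)+1) ≤ |X ω - m0|} := by
        intro ω hω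
        simp only [mem_setOf_eq] at hω
        have habs : 0 < |X ω - m0| := abs_pos.2 (sub_ne_zero.2 hω)
        obtain ⟨i, hi⟩ := exists_nat_one_div_lt habs
        simp only [mem_iUnion, mem_setOf_eq]
        exact ⟨i, hi.le⟩
      refine le_antisymm (le_trans (measure_mono hsub) ?_) zero_le
      refine le_trans (measure_iUnion_le _) ?_
      have h0 : ∀ i : ℕ, P {ω | 1/((i:ℝ)+1) ≤ |X ω - m0|} = 0 :=
        fun i => hXconst _ (by positivity)
      simp only [one_div] at h0
      simp [h0]
    refine ⟨m0, 0, ?_⟩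
    rw [gaussianReal_zero_var, Measure.map_congr hae, Measure.map_const]
    simp
  · -- nondegenerate case
    set v0 : ℝ≥0 := ⟨s0^2, sq_nonneg s0⟩ with hv0_def
    have hsqrt_v0 : Real.sqrt (v0 : ℝ) = s0 := by
      rw [show ((v0:ℝ)) = s0^2 from rfl, Real.sqrt_sq hs0nonneg]
    set G : ℝ → ℝ≥0∞ := fun y => gaussianReal m0 v0 (Iic y) with hG_def
    have hpre : ∀ (mm σ x : ℝ), 0 < σ →
        (fun z => σ * z + mm) ⁻¹' Iic x = Iic ((x - mm)/σ) := by
      intro mm σ x hσ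
      ext z
      simp only [mem_preimage, mem_Iic]
      rw [le_div_iff₀ hσ]
      constructor <;> intro h <;> nlinarith
    have hGstd : ∀ y, G y = gaussianReal 0 1 (Iic ((y - m0)/s0)) := by
      intro y
      show gaussianReal m0 v0 (Iic y) = _
      rw [gauss_std_apply m0 v0 measurableSet_Iic, hsqrt_v0, hpre m0 s0 y hs0pos]
    have hGk : ∀ x : ℝ, Tendsto (fun k => gaussianReal (m (φ k)) (v (φ k)) (Iic x)) atTop
        (𝓝 (G x)) := by
      intro x
      have harg : Tendsto (fun k => (x - m (φ k)) / Real.sqrt (v (φ k))) atTop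
          (𝓝 ((x - m0)/s0)) :=
        ((tendsto_const_nhds (x := x)).sub hmφ).div hsφ (ne_of_gt hs0pos)
      have hcdf : Tendsto (fun k => gaussianReal 0 1 (Iic ((x - m (φ k)) / Real.sqrt (v (φ k)))))
          atTop (𝓝 (gaussianReal 0 1 (Iic ((x - m0)/s0)))) :=
        ((gauss_cdf_continuousAt ((x - m0)/s0)).tendsto).comp harg
      rw [hGstd x]
      apply hcdf.congr'
      have hev : ∀ᶠ k in atTop, 0 < Real.sqrt (v (φ k)) := hsφ.eventually_const_lt hs0pos
      filter_upwards [hev] with k hk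
      rw [gauss_std_apply (m (φ k)) (v (φ k)) measurableSet_Iic, hpre _ _ _ hk]
    have hsetX : ∀ y : ℝ, MeasurableSet {ω | X ω ≤ y} := fun y =>
      measurableSet_le hX measurable_const
    have hIneq1 : ∀ x : ℝ, ∀ ε : ℝ, 0 < ε → P {ω | X ω ≤ x - ε} ≤ G x := by
      intro x ε hε
      have hineq : ∀ k, P {ω | X ω ≤ x - ε} ≤
          gaussianReal (m (φ k)) (v (φ k)) (Iic x) + P {ω | ε ≤ |X ω - S (φ k) ω|} := by
        intro k
        have hsub : {ω | X ω ≤ x - ε} ⊆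
            (S (φ k) ⁻¹' Iic x) ∪ {ω | ε ≤ |X ω - S (φ k) ω|} := by
          intro ω hω
          simp only [mem_setOf_eq, mem_union, mem_preimage, mem_Iic] at hω ⊢
          by_cases habs : ε ≤ |X ω - S (φ k) ω|
          · exact Or.inr habs
          · push_neg at habs
            rw [abs_sub_lt_iff] at habs
            exact Or.inl (by linarith [habs.1, habs.2])
        calc P {ω | X ω ≤ x - ε} ≤ P ((S (φ k) ⁻¹' Iic x) ∪ {ω | ε ≤ |X ω - S (φ k) ω|}) :=
              measure_mono hsub
          _ ≤ P (S (φ k) ⁻¹' Iic x) + P {ω | ε ≤ |X ω - S (φ k) ω|} := measure_union_le _ _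
          _ = _ := by rw [hPmap _ _ measurableSet_Iic]
      have hrhs : Tendsto (fun k => gaussianReal (m (φ k)) (v (φ k)) (Iic x)
          + P {ω | ε ≤ |X ω - S (φ k) ω|}) atTop (𝓝 (G x)) := by
        have := (hGk x).add (hqφ ε hε)
        simpa using this
      exact le_of_tendsto_of_tendsto' tendsto_const_nhds hrhs hineq
    have hIneq2 : ∀ x : ℝ, ∀ ε : ℝ, 0 < ε → G x ≤ P {ω | X ω ≤ x + ε} := by
      intro x ε hε
      have hineq : ∀ k, gaussianReal (m (φ k)) (v (φ k)) (Iic x) ≤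
          P {ω | X ω ≤ x + ε} + P {ω | ε ≤ |X ω - S (φ k) ω|} := by
        intro k
        rw [← hPmap _ _ measurableSet_Iic]
        have hsub : (S (φ k) ⁻¹' Iic x) ⊆
            {ω | X ω ≤ x + ε} ∪ {ω | ε ≤ |X ω - S (φ k) ω|} := by
          intro ω hω
          simp only [mem_setOf_eq, mem_union, mem_preimage, mem_Iic] at hω ⊢
          by_cases habs : ε ≤ |X ω - S (φ k) ω|
          · exact Or.inr habs
          · push_neg at habs
            rw [abs_sub_lt_iff] at habs
            exact Or.inl (by linarith [habs.1, habs.2])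
        exact le_trans (measure_mono hsub) (measure_union_le _ _)
      have hrhs : Tendsto (fun k => P {ω | X ω ≤ x + ε} + P {ω | ε ≤ |X ω - S (φ k) ω|})
          atTop (𝓝 (P {ω | X ω ≤ x + ε})) := by
        have := (tendsto_const_nhds (x := P {ω | X ω ≤ x + ε})).add (hqφ ε hε)
        simpa using this
      exact le_of_tendsto_of_tendsto' (hGk x) hrhs hineq
    have hCDF : ∀ x : ℝ, P {ω | X ω ≤ x} = G x := by
      intro x
      refine le_antisymm ?_ ?_
      · have hle : ∀ i : ℕ, P {ω | X ω ≤ x} ≤ G (x + 1/((i:ℝ)+1)) := by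
          intro i
          have := hIneq1 (x + 1/((i:ℝ)+1)) (1/((i:ℝ)+1)) (by positivity)
          simpa using this
        have h1 : Tendsto (fun i : ℕ => x + 1/((i:ℝ)+1)) atTop (𝓝 x) := by
          have h2 := tendsto_one_div_add_atTop_nhds_zero_nat (𝕜 := ℝ)
          have := (tendsto_const_nhds (x := x)).add h2
          simpa using this
        have hGcont : Tendsto (fun i : ℕ => G (x + 1/((i:ℝ)+1))) atTop (𝓝 (G x)) := by
          have harg := (h1.sub_const m0).div_const s0
          have hcdf := ((gauss_cdf_continuousAt ((x - m0)/s0)).tendsto).comp harg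
          simp_rw [hGstd]
          exact hcdf
        exact ge_of_tendsto hGcont (Eventually.of_forall hle)
      · have hle : ∀ i : ℕ, G x ≤ P {ω | X ω ≤ x + 1/((i:ℝ)+1)} := fun i =>
          hIneq2 x _ (by positivity)
        have hPcont : Tendsto (fun i : ℕ => P {ω | X ω ≤ x + 1/((i:ℝ)+1)}) atTop
            (𝓝 (P {ω | X ω ≤ x})) := by
          have hanti : Antitone (fun i : ℕ => {ω | X ω ≤ x + 1/((i:ℝ)+1)}) := by
            intro i j hij ω hω
            simp only [mem_setOf_eq] at hω ⊢
            have : (1:ℝ)/(j+1) ≤ 1/(i+1) := by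
              apply one_div_le_one_div_of_le (by positivity)
              exact_mod_cast Nat.succ_le_succ hij
            linarith
          have hinter : (⋂ i : ℕ, {ω | X ω ≤ x + 1/((i:ℝ)+1)}) = {ω | X ω ≤ x} := by
            ext ω
            simp only [mem_iInter, mem_setOf_eq]
            constructor
            · intro h
              by_contra hx
              push_neg at hx
              obtain ⟨i, hi⟩ := exists_nat_one_div_lt (show (0:ℝ) < X ω - x by linarith)
              have := h i
              linarith
            · intro hω i
              have : (0:ℝ) < 1/((i:ℝ)+1) := by positivity
              linarith
          have := tendsto_measure_iInter_atTop (μ := P)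
            (fun i => (hsetX _).nullMeasurableSet) hanti ⟨0, measure_ne_top _ _⟩
          rw [hinter] at this
          exact this
        exact ge_of_tendsto hPcont (Eventually.of_forall hle)
    refine ⟨m0, v0, ?_⟩
    haveI : IsProbabilityMeasure (P.map X) := Measure.isProbabilityMeasure_map hX.aemeasurable
    refine MeasureTheory.Measure.ext_of_Iic (P.map X) _ (fun x => ?_)
    rw [Measure.map_apply hX measurableSet_Iic]
    exact hCDF x

end StmtAux

end StmtAuxSection

open Filter Topology

/-- If `ζ` is a Gaussian process on `[0,1]` with continuous sample paths
(each `ζ(·,t)` measurable), then the law of the induced `C([0,1],ℝ)`-valued random variable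
`ζ̃` is a Gaussian measure: the pushforward of the law under any continuous linear functional
is a (possibly degenerate) Gaussian measure on `ℝ`. -/
theorem stmt1 {Ω : Type*} [MeasurableSpace Ω] (P : Measure Ω) [IsProbabilityMeasure P]
    (ζ : Ω → Set.Icc (0:ℝ) 1 → ℝ)
    (hmeas : ∀ t : Set.Icc (0:ℝ) 1, Measurable fun ω => ζ ω t)
    (hcont : ∀ ω, Continuous (ζ ω))
    (hgauss : ∀ (k : ℕ) (t : Fin k → Set.Icc (0:ℝ) 1) (c : Fin k → ℝ),
      ∃ (m : ℝ) (v : ℝ≥0),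
        P.map (fun ω => ∑ i, c i * ζ ω (t i)) = gaussianReal m v) :
    ∀ L : C(Set.Icc (0:ℝ) 1, ℝ) →L[ℝ] ℝ, ∃ (m : ℝ) (v : ℝ≥0),
      (P.map (fun ω => (⟨ζ ω, hcont ω⟩ : C(Set.Icc (0:ℝ) 1, ℝ)))).map L
        = gaussianReal m v := by
  intro L
  classical
  set F : Ω → C(Set.Icc (0:ℝ) 1, ℝ) := fun ω => ⟨ζ ω, hcont ω⟩ with hF_def
  have hGmeas : ∀ n : ℕ,
      Measurable (fun ω => (bernsteinApproximation n (F ω) : C(Set.Icc (0:ℝ) 1, ℝ))) := by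
    intro n
    have hcontmap : Continuous (fun a : Fin (n+1) → ℝ =>
        (∑ k : Fin (n+1), bernstein n k • ContinuousMap.const _ (a k) : C(Set.Icc (0:ℝ) 1, ℝ))) := by
      apply continuous_finset_sum
      intro k _
      exact (continuous_const (y := (bernstein n k : C(Set.Icc (0:ℝ) 1, ℝ)))).mul ((ContinuousMap.continuous_const' (X := Set.Icc (0:ℝ) 1) (Y := ℝ)).comp (continuous_apply k : Continuous fun a : Fin (n+1) → ℝ => a k))
    have hvec : Measurable (fun ω => (fun k : Fin (n+1) => ζ ω (bernstein.z k))) :=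
      measurable_pi_lambda _ (fun k => hmeas _)
    exact hcontmap.measurable.comp hvec
  have htend : ∀ ω, Tendsto (fun n => (bernsteinApproximation n (F ω) : C(Set.Icc (0:ℝ) 1, ℝ)))
      atTop (𝓝 (F ω)) := fun ω => bernsteinApproximation_uniform (F ω)
  have hFmeas : Measurable F :=
    measurable_of_tendsto_metrizable hGmeas (tendsto_pi_nhds.2 htend)
  set X : Ω → ℝ := fun ω => L (F ω) with hX_def
  have hXmeas : Measurable X := L.continuous.measurable.comp hFmeas
  set S : ℕ → Ω → ℝ :=
    fun n ω => ∑ k : Fin (n+1), L (bernstein n k) * ζ ω (bernstein.z k) with hS_def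
  have hSmeas : ∀ n, Measurable (S n) := fun n =>
    Finset.measurable_sum _ (fun k _ => (hmeas _).const_mul _)
  have hSL : ∀ n ω, L (bernsteinApproximation n (F ω)) = S n ω := by
    intro n ω
    show L (∑ k : Fin (n+1), bernstein n k • ContinuousMap.const _ (F ω (bernstein.z k))) = _
    rw [map_sum]
    refine Finset.sum_congr rfl (fun k _ => ?_)
    rw [show bernstein n k • ContinuousMap.const _ (F ω (bernstein.z k))
      = F ω (bernstein.z k) • bernstein n k by ext x; simp [mul_comm]]
    rw [_root_.map_smul, smul_eq_mul, mul_comm]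
    rfl
  have hlim : ∀ ω, Tendsto (fun n => S n ω) atTop (𝓝 (X ω)) := by
    intro ω
    have := (L.continuous.tendsto (F ω)).comp (htend ω)
    exact this.congr (fun n => hSL n ω)
  have hmapS : ∀ n, ∃ (mn : ℝ) (vn : ℝ≥0), P.map (S n) = gaussianReal mn vn := by
    intro n
    exact hgauss (n+1) (fun k => bernstein.z k) (fun k => L (bernstein n k))
  choose mS vS hmapS' using hmapS
  obtain ⟨m0, v0, h⟩ := StmtAux.main_aux P S X hSmeas hXmeas hlim mS vS hmapS'
  refine ⟨m0, v0, ?_⟩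
  rw [Measure.map_map L.continuous.measurable hFmeas]
  exact h
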